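/- Let ε ≥ 0 and let w ∈ ℝ^n with nonnegative entries satisfy Σ_{i=1}^n w_i = d and a_jᵀQ⁻¹a_j ≤ 1+ε for all j ∈ [n], where Q = Σ_{i=1}^n w_i a_i a_iᵀ is positive definite. Define the ellipsoid E = {x ∈ ℝ^d : xᵀQx ≤ 1}. Then (1/√(1+ε))·E ⊆ P ⊆ √d·E, where c·E denotes {c·x : x ∈ E}. -/
import Mathlib


open Matrix Finset Pointwise

/-- `Q(w) = Σᵢ wᵢ aᵢ aᵢᵀ`, where `aᵢᵀ` is the `i`-th row of `A`. -/
noncomputable def Qmat {n d : ℕ} (A : Matrix (Fin n) (Fin d) ℝ) (w : Fin n → ℝ) :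
    Matrix (Fin d) (Fin d) ℝ :=
  ∑ i : Fin n, w i • vecMulVec (A i) (A i)

lemma qform {n d : ℕ} (A : Matrix (Fin n) (Fin d) ℝ) (w : Fin n → ℝ)
    (x y : Fin d → ℝ) :
    x ⬝ᵥ (Qmat A w *ᵥ y) = ∑ i : Fin n, w i * ((A i ⬝ᵥ x) * (A i ⬝ᵥ y)) := by
  simp only [Qmat, dotProduct, mulVec, Matrix.sum_apply, Pi.smul_apply,
    Matrix.smul_apply, vecMulVec_apply, smul_eq_mul, Finset.mul_sum, Finset.sum_mul]
  calc ∑ l : Fin d, ∑ k : Fin d, ∑ i : Fin n, x l * (w i * (A i l * A i k) * y k)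
      = ∑ l : Fin d, ∑ i : Fin n, ∑ k : Fin d, x l * (w i * (A i l * A i k) * y k) :=
        Finset.sum_congr rfl fun l _ => Finset.sum_comm
    _ = ∑ i : Fin n, ∑ l : Fin d, ∑ k : Fin d, x l * (w i * (A i l * A i k) * y k) :=
        Finset.sum_comm
    _ = ∑ i : Fin n, ∑ k : Fin d, ∑ l : Fin d, x l * (w i * (A i l * A i k) * y k) :=
        Finset.sum_congr rfl fun i _ => Finset.sum_comm
    _ = ∑ i : Fin n, ∑ k : Fin d, ∑ l : Fin d, w i * (A i l * x l * (A i k * y k)) := by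
        refine Finset.sum_congr rfl fun i _ => Finset.sum_congr rfl fun k _ =>
          Finset.sum_congr rfl fun l _ => by ring

lemma qform_nonneg {n d : ℕ} (A : Matrix (Fin n) (Fin d) ℝ) (w : Fin n → ℝ)
    (hw : ∀ i, 0 ≤ w i) (x : Fin d → ℝ) : 0 ≤ x ⬝ᵥ (Qmat A w *ᵥ x) := by
  rw [qform]
  exact Finset.sum_nonneg fun i _ => mul_nonneg (hw i) (mul_self_nonneg _)

/-- Cauchy–Schwarz for the quadratic form. -/
lemma qform_cs {n d : ℕ} (A : Matrix (Fin n) (Fin d) ℝ) (w : Fin n → ℝ)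
    (hw : ∀ i, 0 ≤ w i) (x y : Fin d → ℝ) :
    (x ⬝ᵥ (Qmat A w *ᵥ y)) ^ 2 ≤
      (x ⬝ᵥ (Qmat A w *ᵥ x)) * (y ⬝ᵥ (Qmat A w *ᵥ y)) := by
  set Bxx := x ⬝ᵥ (Qmat A w *ᵥ x) with hBxx
  set Bxy := x ⬝ᵥ (Qmat A w *ᵥ y) with hBxy
  set Byy := y ⬝ᵥ (Qmat A w *ᵥ y) with hByy
  have key : ∀ t : ℝ, 0 ≤ Byy * (t * t) + (2 * Bxy) * t + Bxx := by
    intro t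
    have h := qform_nonneg A w hw (x + t • y)
    rw [qform] at h
    have hx : x + t • y = fun k => x k + t * y k := rfl
    calc 0 ≤ ∑ i : Fin n, w i * ((A i ⬝ᵥ (x + t • y)) * (A i ⬝ᵥ (x + t • y))) := h
      _ = Byy * (t * t) + (2 * Bxy) * t + Bxx := by
          rw [hBxx, hBxy, hByy, qform, qform, qform, Finset.sum_mul,
            Finset.mul_sum, Finset.sum_mul, ← Finset.sum_add_distrib,
            ← Finset.sum_add_distrib]
          refine Finset.sum_congr rfl fun i _ => ?_
          have : A i ⬝ᵥ (x + t • y) = A i ⬝ᵥ x + t * (A i ⬝ᵥ y) := by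
            rw [dotProduct_add, dotProduct_smul, smul_eq_mul]
          rw [this]; ring
  have hd := discrim_le_zero key
  rw [discrim] at hd
  nlinarith [hd]

/-- A `(1+ε)`-approximate John ellipsoid solution gives a good rounding:
`(1/√(1+ε))·E ⊆ P ⊆ √d·E`. -/
theorem approx_john_ellipsoid_good_rounding
    (n d : ℕ) (A : Matrix (Fin n) (Fin d) ℝ) (hrank : A.rank = d)
    (ε : ℝ) (hε : 0 ≤ ε) (w : Fin n → ℝ) (hw : ∀ i, 0 ≤ w i)
    (hsum : (∑ i : Fin n, w i) = (d : ℝ)) (hQ : (Qmat A w).PosDef)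
    (happrox : ∀ j : Fin n, A j ⬝ᵥ ((Qmat A w)⁻¹ *ᵥ A j) ≤ 1 + ε) :
    (1 / Real.sqrt (1 + ε)) • {x : Fin d → ℝ | x ⬝ᵥ (Qmat A w *ᵥ x) ≤ 1} ⊆
        {x : Fin d → ℝ | ∀ i : Fin n, |A i ⬝ᵥ x| ≤ 1} ∧
      {x : Fin d → ℝ | ∀ i : Fin n, |A i ⬝ᵥ x| ≤ 1} ⊆
        Real.sqrt d • {x : Fin d → ℝ | x ⬝ᵥ (Qmat A w *ᵥ x) ≤ 1} := by
  have hQdet : IsUnit (Qmat A w).det := isUnit_iff_ne_zero.mpr (ne_of_gt hQ.det_pos)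
  have hQinv : Qmat A w * (Qmat A w)⁻¹ = 1 := Matrix.mul_nonsing_inv _ hQdet
  have h1ε : (0:ℝ) < 1 + ε := by linarith
  have hsqrt : 0 < Real.sqrt (1 + ε) := Real.sqrt_pos.mpr h1ε
  constructor
  · rintro y ⟨x, hx, rfl⟩
    intro j
    -- Cauchy-Schwarz with y = Q⁻¹ aⱼ
    have hBxy : x ⬝ᵥ (Qmat A w *ᵥ ((Qmat A w)⁻¹ *ᵥ A j)) = x ⬝ᵥ A j := by
      rw [Matrix.mulVec_mulVec, hQinv, Matrix.one_mulVec]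
    have hByy : ((Qmat A w)⁻¹ *ᵥ A j) ⬝ᵥ (Qmat A w *ᵥ ((Qmat A w)⁻¹ *ᵥ A j))
        = A j ⬝ᵥ ((Qmat A w)⁻¹ *ᵥ A j) := by
      rw [Matrix.mulVec_mulVec, hQinv, Matrix.one_mulVec, dotProduct_comm]
    have hcs := qform_cs A w hw x ((Qmat A w)⁻¹ *ᵥ A j)
    rw [hBxy, hByy] at hcs
    have hBxx : x ⬝ᵥ (Qmat A w *ᵥ x) ≤ 1 := hx
    have hBxx0 : 0 ≤ x ⬝ᵥ (Qmat A w *ᵥ x) := qform_nonneg A w hw x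
    have hByy0 : 0 ≤ A j ⬝ᵥ ((Qmat A w)⁻¹ *ᵥ A j) := by
      rw [← hByy]; exact qform_nonneg A w hw _
    have hsq : (x ⬝ᵥ A j) ^ 2 ≤ 1 + ε := by
      calc (x ⬝ᵥ A j) ^ 2 ≤ (x ⬝ᵥ (Qmat A w *ᵥ x)) * (A j ⬝ᵥ ((Qmat A w)⁻¹ *ᵥ A j)) := hcs
        _ ≤ 1 * (1 + ε) := mul_le_mul hBxx (happrox j) hByy0 zero_le_one
        _ = 1 + ε := one_mul _
    have habs : |x ⬝ᵥ A j| ≤ Real.sqrt (1 + ε) := by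
      rw [← Real.sqrt_sq_eq_abs]
      exact Real.sqrt_le_sqrt hsq
    have : A j ⬝ᵥ (1 / Real.sqrt (1 + ε)) • x
        = (1 / Real.sqrt (1 + ε)) * (A j ⬝ᵥ x) := by
      rw [dotProduct_smul, smul_eq_mul]
    show |A j ⬝ᵥ ((1 / Real.sqrt (1 + ε)) • x)| ≤ 1
    rw [this, abs_mul, abs_of_pos (by positivity), dotProduct_comm]
    calc 1 / Real.sqrt (1 + ε) * |x ⬝ᵥ A j|
        ≤ 1 / Real.sqrt (1 + ε) * Real.sqrt (1 + ε) := by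
          exact mul_le_mul_of_nonneg_left habs (by positivity)
      _ = 1 := by field_simp
  · intro x hx
    have hxQ : x ⬝ᵥ (Qmat A w *ᵥ x) ≤ (d : ℝ) := by
      rw [qform, ← hsum]
      refine Finset.sum_le_sum fun i _ => ?_
      have h1 := hx i
      have : (A i ⬝ᵥ x) * (A i ⬝ᵥ x) ≤ 1 := by
        calc (A i ⬝ᵥ x) * (A i ⬝ᵥ x) = |A i ⬝ᵥ x| * |A i ⬝ᵥ x| := (abs_mul_abs_self _).symm
          _ ≤ 1 * 1 := mul_le_mul h1 h1 (abs_nonneg _) zero_le_one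
          _ = 1 := one_mul 1
      calc w i * ((A i ⬝ᵥ x) * (A i ⬝ᵥ x)) ≤ w i * 1 := by
            exact mul_le_mul_of_nonneg_left this (hw i)
        _ = w i := mul_one _
    rcases Nat.eq_zero_or_pos d with hd | hd
    · refine ⟨0, ?_, ?_⟩
      · show (0 : Fin d → ℝ) ⬝ᵥ (Qmat A w *ᵥ 0) ≤ 1
        simp [zero_dotProduct]
      · funext k
        exact absurd k.isLt (by omega)
    · have hdpos : (0:ℝ) < d := Nat.cast_pos.mpr hd
      have hsd : 0 < Real.sqrt d := Real.sqrt_pos.mpr hdpos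
      refine ⟨(Real.sqrt d)⁻¹ • x, ?_, ?_⟩
      · show ((Real.sqrt d)⁻¹ • x) ⬝ᵥ (Qmat A w *ᵥ (Real.sqrt d)⁻¹ • x) ≤ 1
        rw [smul_dotProduct, Matrix.mulVec_smul, dotProduct_smul, smul_eq_mul,
          smul_eq_mul]
        have hsq : (Real.sqrt d)⁻¹ * ((Real.sqrt d)⁻¹) = (d : ℝ)⁻¹ := by
          rw [← mul_inv, Real.mul_self_sqrt hdpos.le]
        rw [← mul_assoc, hsq]
        rw [inv_mul_le_iff₀ hdpos]
        linarith
      · show Real.sqrt (d:ℝ) • ((Real.sqrt (d:ℝ))⁻¹ • x) = x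
        rw [smul_smul, mul_inv_cancel₀ (ne_of_gt hsd), one_smul]
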